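/- For any saturated pure partial plane of even order n ≥ 2, there exists a point whose degree is at least 3, i.e., a point lying on at least 3 lines. -/

import Mathlib

/-- A pure partial plane (PPP) of order `n`: a finite collection of distinct lines,
each an `(n+1)`-element subset of a point set of `n^2+n+1` points, such that any two
distinct lines intersect in exactly one point. -/
def IsPPP (n : ℕ) (L : Finset (Finset (Fin (n ^ 2 + n + 1)))) : Prop :=
  (∀ ℓ ∈ L, ℓ.card = n + 1) ∧
    ∀ ℓ₁ ∈ L, ∀ ℓ₂ ∈ L, ℓ₁ ≠ ℓ₂ → (ℓ₁ ∩ ℓ₂).card = 1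

/-- The degree of a point: the number of lines of the collection containing it. -/
def ppDeg {n : ℕ} (L : Finset (Finset (Fin (n ^ 2 + n + 1))))
    (p : Fin (n ^ 2 + n + 1)) : ℕ :=
  (L.filter fun ℓ => p ∈ ℓ).card

/-- A PPP is saturated if no `(n+1)`-element subset of the point set not already in the
collection intersects every line of the collection in exactly one point. -/
def IsSaturated (n : ℕ) (L : Finset (Finset (Fin (n ^ 2 + n + 1)))) : Prop :=
  ¬ ∃ ℓ' : Finset (Fin (n ^ 2 + n + 1)), ℓ' ∉ L ∧ ℓ'.card = n + 1 ∧
      ∀ ℓ ∈ L, (ℓ' ∩ ℓ).card = 1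

noncomputable def theInter {α : Type*} [DecidableEq α] [Inhabited α] (s t : Finset α) : α :=
  if h : (s ∩ t).Nonempty then h.choose else default

lemma theInter_mem {α : Type*} [DecidableEq α] [Inhabited α] {s t : Finset α}
    (h : (s ∩ t).Nonempty) : theInter s t ∈ s ∩ t := by
  rw [theInter, dif_pos h]; exact h.choose_spec

lemma inter_eq_theInter {α : Type*} [DecidableEq α] [Inhabited α] {s t : Finset α}
    (h : (s ∩ t).card = 1) : s ∩ t = {theInter s t} := by
  obtain ⟨a, ha⟩ := Finset.card_eq_one.mp h
  have hne : (s ∩ t).Nonempty := by rw [ha]; exact ⟨a, by simp⟩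
  have hmem := theInter_mem hne
  rw [ha, Finset.mem_singleton] at hmem
  rw [ha, hmem]

lemma theInter_mem_left {α : Type*} [DecidableEq α] [Inhabited α] {s t : Finset α}
    (h : (s ∩ t).card = 1) : theInter s t ∈ s := by
  have h2 : theInter s t ∈ s ∩ t := by rw [inter_eq_theInter h]; simp
  exact (Finset.mem_inter.mp h2).1

lemma theInter_mem_right {α : Type*} [DecidableEq α] [Inhabited α] {s t : Finset α}
    (h : (s ∩ t).card = 1) : theInter s t ∈ t := by
  have h2 : theInter s t ∈ s ∩ t := by rw [inter_eq_theInter h]; simp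
  exact (Finset.mem_inter.mp h2).2

lemma ppDeg_ge_one {n : ℕ} {L : Finset (Finset (Fin (n^2+n+1)))} {p : Fin (n^2+n+1)}
    {a : Finset (Fin (n^2+n+1))} (ha : a ∈ L) (hpa : p ∈ a) : 1 ≤ ppDeg L p := by
  have : a ∈ L.filter (fun ℓ => p ∈ ℓ) := Finset.mem_filter.mpr ⟨ha, hpa⟩
  exact Finset.card_pos.mpr ⟨a, this⟩

lemma ppDeg_ge_two {n : ℕ} {L : Finset (Finset (Fin (n^2+n+1)))} {p : Fin (n^2+n+1)}
    {a b : Finset (Fin (n^2+n+1))} (ha : a ∈ L) (hb : b ∈ L) (hab : a ≠ b)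
    (hpa : p ∈ a) (hpb : p ∈ b) : 2 ≤ ppDeg L p := by
  have hsub : ({a, b} : Finset _) ⊆ L.filter (fun ℓ => p ∈ ℓ) := by
    intro x hx
    simp only [Finset.mem_insert, Finset.mem_singleton] at hx
    rcases hx with h | h <;> subst h <;> exact Finset.mem_filter.mpr ⟨by assumption, by assumption⟩
  have hc : ({a, b} : Finset _).card = 2 := by
    rw [Finset.card_insert_of_notMem (by simpa using hab), Finset.card_singleton]
  calc 2 = ({a,b} : Finset _).card := hc.symm
    _ ≤ _ := Finset.card_le_card hsub

lemma ppDeg_ge_three {n : ℕ} {L : Finset (Finset (Fin (n^2+n+1)))} {p : Fin (n^2+n+1)}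
    {a b c : Finset (Fin (n^2+n+1))} (ha : a ∈ L) (hb : b ∈ L) (hc : c ∈ L)
    (hab : a ≠ b) (hac : a ≠ c) (hbc : b ≠ c)
    (hpa : p ∈ a) (hpb : p ∈ b) (hpc : p ∈ c) : 3 ≤ ppDeg L p := by
  have hsub : ({a, b, c} : Finset _) ⊆ L.filter (fun ℓ => p ∈ ℓ) := by
    intro x hx
    simp only [Finset.mem_insert, Finset.mem_singleton] at hx
    rcases hx with h | h | h <;> subst h <;>
      exact Finset.mem_filter.mpr ⟨by assumption, by assumption⟩
  have hcard : ({a, b, c} : Finset _).card = 3 := by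
    rw [Finset.card_insert_of_notMem (by simp [hab, hac]),
      Finset.card_insert_of_notMem (by simpa using hbc), Finset.card_singleton]
  calc 3 = ({a,b,c} : Finset _).card := hcard.symm
    _ ≤ _ := Finset.card_le_card hsub

/-- For any saturated pure partial plane of even order `n ≥ 2`, some point lies on at
least 3 lines. -/
theorem sppp_even_order_point_of_degree_ge_three (n : ℕ) (hn : 2 ≤ n) (heven : Even n)
    (L : Finset (Finset (Fin (n ^ 2 + n + 1))))
    (hL : IsPPP n L) (hsat : IsSaturated n L) :
    ∃ p : Fin (n ^ 2 + n + 1), 3 ≤ ppDeg L p := by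
  classical
  by_contra hcon
  push_neg at hcon
  obtain ⟨hcard, hint⟩ := hL
  have hdeg2 : ∀ p, ppDeg L p ≤ 2 := fun p => Nat.lt_succ_iff.mp (hcon p)
  -- intersection singleton
  have hsing : ∀ ℓ₁ ∈ L, ∀ ℓ₂ ∈ L, ℓ₁ ≠ ℓ₂ → ℓ₁ ∩ ℓ₂ = {theInter ℓ₁ ℓ₂} :=
    fun ℓ₁ h1 ℓ₂ h2 hne => inter_eq_theInter (hint ℓ₁ h1 ℓ₂ h2 hne)
  -- injectivity on erase
  have hinjOn : ∀ ℓ ∈ L, Set.InjOn (theInter ℓ) (L.erase ℓ) := by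
    intro ℓ hℓ ℓ₁ h1 ℓ₂ h2 heq
    by_contra hne
    have h1' := Finset.mem_erase.mp h1
    have h2' := Finset.mem_erase.mp h2
    have hm1 : theInter ℓ ℓ₁ ∈ ℓ := theInter_mem_left (hint ℓ hℓ ℓ₁ h1'.2 (Ne.symm h1'.1))
    have hm1' : theInter ℓ ℓ₁ ∈ ℓ₁ := theInter_mem_right (hint ℓ hℓ ℓ₁ h1'.2 (Ne.symm h1'.1))
    have hm2' : theInter ℓ ℓ₂ ∈ ℓ₂ := theInter_mem_right (hint ℓ hℓ ℓ₂ h2'.2 (Ne.symm h2'.1))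
    rw [← heq] at hm2'
    have h3 := ppDeg_ge_three hℓ h1'.2 h2'.2 (Ne.symm h1'.1) (Ne.symm h2'.1) hne hm1 hm1' hm2'
    have h4 := hcon (theInter ℓ ℓ₁)
    omega
  -- bound on the number of lines
  have hbound : ∀ ℓ ∈ L, (L.erase ℓ).card ≤ n + 1 := by
    intro ℓ hℓ
    have himg : ((L.erase ℓ).image (theInter ℓ)) ⊆ ℓ := by
      intro x hx
      obtain ⟨ℓ', h', rfl⟩ := Finset.mem_image.mp hx
      have h'' := Finset.mem_erase.mp h'
      exact theInter_mem_left (hint ℓ hℓ ℓ' h''.2 (Ne.symm h''.1))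
    calc (L.erase ℓ).card = ((L.erase ℓ).image (theInter ℓ)).card :=
          (Finset.card_image_of_injOn (hinjOn ℓ hℓ)).symm
      _ ≤ ℓ.card := Finset.card_le_card himg
      _ = n + 1 := hcard ℓ hℓ
  -- final contradiction helper
  have hfinal : ∀ ℓ' : Finset (Fin (n^2+n+1)), ℓ'.card = n+1 →
      (∀ ℓ ∈ L, (ℓ' ∩ ℓ).card = 1) → False := by
    intro ℓ' hc hprop
    apply hsat
    refine ⟨ℓ', ?_, hc, hprop⟩
    intro hmem
    have := hprop ℓ' hmem
    rw [Finset.inter_self] at this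
    omega
  -- uncovered points
  set U := Finset.univ.filter (fun p => ppDeg L p = 0) with hUdef
  set C := Finset.univ.filter (fun p => ¬ ppDeg L p = 0) with hCdef
  have hUC : U.card + C.card = n^2+n+1 := by
    rw [hUdef, hCdef, Finset.card_filter_add_card_filter_not]
    simp
  have hCsub : C ⊆ L.biUnion id := by
    intro p hp
    have hp' := (Finset.mem_filter.mp hp).2
    have : (L.filter (fun l => p ∈ l)).Nonempty := by
      rw [← Finset.card_pos]
      have : ppDeg L p ≠ 0 := hp'
      unfold ppDeg at this
      omega
    obtain ⟨ℓ, hℓ⟩ := this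
    obtain ⟨hℓL, hpℓ⟩ := Finset.mem_filter.mp hℓ
    exact Finset.mem_biUnion.mpr ⟨ℓ, hℓL, hpℓ⟩
  have hCle : C.card ≤ L.card * (n+1) := by
    calc C.card ≤ (L.biUnion id).card := Finset.card_le_card hCsub
      _ ≤ ∑ ℓ ∈ L, (id ℓ).card := Finset.card_biUnion_le
      _ = ∑ ℓ ∈ L, (n+1) := Finset.sum_congr rfl (fun ℓ hℓ => hcard ℓ hℓ)
      _ = L.card * (n+1) := by rw [Finset.sum_const, smul_eq_mul]
  rcases le_or_gt L.card (n+1) with hm | hm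
  · -- Case A : at most n+1 lines
    have hone : ∀ ℓ, ∃ p, ℓ ∈ L → (p ∈ ℓ ∧ ppDeg L p = 1) := by
      intro ℓ
      by_cases hℓ : ℓ ∈ L
      · have hsub : ℓ.filter (fun p => 2 ≤ ppDeg L p) ⊆ (L.erase ℓ).image (theInter ℓ) := by
          intro p hp
          obtain ⟨hpℓ, hdp⟩ := Finset.mem_filter.mp hp
          have h2 : 1 < (L.filter (fun l => p ∈ l)).card := hdp
          obtain ⟨ℓ'', hℓ'', hne⟩ := Finset.exists_mem_ne h2 ℓ
          obtain ⟨hℓ''L, hpℓ''⟩ := Finset.mem_filter.mp hℓ''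
          refine Finset.mem_image.mpr ⟨ℓ'', Finset.mem_erase.mpr ⟨hne, hℓ''L⟩, ?_⟩
          have hmem : p ∈ ℓ ∩ ℓ'' := Finset.mem_inter.mpr ⟨hpℓ, hpℓ''⟩
          rw [hsing ℓ hℓ ℓ'' hℓ''L (Ne.symm hne)] at hmem
          exact (Finset.mem_singleton.mp hmem).symm
        have hle : (ℓ.filter (fun p => 2 ≤ ppDeg L p)).card ≤ n := by
          have h1 : L.card ≠ 0 := fun h => by simp [Finset.card_eq_zero.mp h] at hℓ
          calc _ ≤ ((L.erase ℓ).image (theInter ℓ)).card := Finset.card_le_card hsub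
            _ ≤ (L.erase ℓ).card := Finset.card_image_le
            _ = L.card - 1 := Finset.card_erase_of_mem hℓ
            _ ≤ n := by omega
        have hsplit := Finset.card_filter_add_card_filter_not
          (s := ℓ) (p := fun p => 2 ≤ ppDeg L p)
        have hpos : 0 < (ℓ.filter (fun p => ¬ 2 ≤ ppDeg L p)).card := by
          have := hcard ℓ hℓ
          omega
        obtain ⟨p, hp⟩ := Finset.card_pos.mp hpos
        obtain ⟨hpℓ, hdp⟩ := Finset.mem_filter.mp hp
        refine ⟨p, fun _ => ⟨hpℓ, ?_⟩⟩
        have := ppDeg_ge_one hℓ hpℓ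
        omega
      · exact ⟨default, fun h => absurd h hℓ⟩
    choose f hf using hone
    have hfinj : Set.InjOn f L := by
      intro ℓ₁ h1 ℓ₂ h2 heq
      by_contra hne
      have hp1 := hf ℓ₁ h1
      have hp2 := hf ℓ₂ h2
      have : 2 ≤ ppDeg L (f ℓ₁) :=
        ppDeg_ge_two h1 h2 hne hp1.1 (heq ▸ hp2.1)
      omega
    have hUB : n + 1 - L.card ≤ U.card := by
      rcases Nat.lt_or_ge L.card (n+1) with hlt | hge
      · have hm' : L.card ≤ n := by omega
        have h3 : C.card + (n + 1) ≤ (n^2+n+1) + L.card := by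
          have h4 : L.card * (n+1) + (n+1) ≤ (n^2+n+1) + L.card := by nlinarith
          omega
        have h5 : C.card + (n+1) ≤ U.card + C.card + L.card := by
          refine le_trans h3 (le_of_eq ?_)
          rw [hUC]
        omega
      · omega
    obtain ⟨T, hTU, hTcard⟩ := Finset.exists_subset_card_eq hUB
    set ℓ' := (L.image f) ∪ T with hℓ'def
    have hdisj : Disjoint (L.image f) T := by
      rw [Finset.disjoint_left]
      intro x hx hxT
      obtain ⟨ℓ₀, hℓ₀, rfl⟩ := Finset.mem_image.mp hx
      have h1 := (hf ℓ₀ hℓ₀).2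
      have h0 := (Finset.mem_filter.mp (hTU hxT)).2
      omega
    have hcard' : ℓ'.card = n + 1 := by
      rw [hℓ'def, Finset.card_union_of_disjoint hdisj,
        Finset.card_image_of_injOn hfinj, hTcard]
      omega
    have hprop : ∀ ℓ ∈ L, (ℓ' ∩ ℓ).card = 1 := by
      intro ℓ hℓ
      have hmemf : f ℓ ∈ ℓ' ∩ ℓ := by
        refine Finset.mem_inter.mpr ⟨?_, (hf ℓ hℓ).1⟩
        exact Finset.mem_union_left _ (Finset.mem_image_of_mem f hℓ)
      have huniq : ∀ x ∈ ℓ' ∩ ℓ, x = f ℓ := by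
        intro x hx
        obtain ⟨hxℓ', hxℓ⟩ := Finset.mem_inter.mp hx
        rcases Finset.mem_union.mp hxℓ' with hxi | hxT
        · obtain ⟨ℓ₂, hℓ₂, rfl⟩ := Finset.mem_image.mp hxi
          by_contra hne
          have hℓne : ℓ₂ ≠ ℓ := fun h => hne (by rw [h])
          have h2 : 2 ≤ ppDeg L (f ℓ₂) := ppDeg_ge_two hℓ₂ hℓ hℓne (hf ℓ₂ hℓ₂).1 hxℓ
          have h1 := (hf ℓ₂ hℓ₂).2
          omega
        · have h0 := (Finset.mem_filter.mp (hTU hxT)).2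
          have h1 := ppDeg_ge_one hℓ hxℓ
          omega
      exact Finset.card_eq_one.mpr ⟨f ℓ, Finset.eq_singleton_iff_unique_mem.mpr ⟨hmemf, huniq⟩⟩
    exact hfinal ℓ' hcard' hprop
  · -- Case B : exactly n+2 lines
    obtain ⟨k, hk⟩ := heven
    have hk1 : 1 ≤ k := by omega
    have hLne : L.Nonempty := Finset.card_pos.mp (by omega)
    obtain ⟨ℓ₀, hℓ₀⟩ := hLne
    have hm2 : L.card = n + 2 := by
      have h1 := hbound ℓ₀ hℓ₀
      have h2 := Finset.card_erase_of_mem hℓ₀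
      omega
    -- every covered point has degree exactly 2
    have hdegC : ∀ p : Fin (n^2+n+1), ppDeg L p ≠ 0 → ppDeg L p = 2 := by
      intro p hp
      have hne : (L.filter (fun l => p ∈ l)).Nonempty := by
        rw [← Finset.card_pos]
        unfold ppDeg at hp
        omega
      obtain ⟨ℓ, hℓ'⟩ := hne
      obtain ⟨hℓL, hpℓ⟩ := Finset.mem_filter.mp hℓ'
      have himg : ((L.erase ℓ).image (theInter ℓ)) = ℓ := by
        apply Finset.eq_of_subset_of_card_le
        · intro x hx
          obtain ⟨ℓ'', h'', rfl⟩ := Finset.mem_image.mp hx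
          have h3 := Finset.mem_erase.mp h''
          exact theInter_mem_left (hint ℓ hℓL ℓ'' h3.2 (Ne.symm h3.1))
        · rw [Finset.card_image_of_injOn (hinjOn ℓ hℓL), Finset.card_erase_of_mem hℓL,
            hcard ℓ hℓL, hm2]
          omega
      have hpim : p ∈ (L.erase ℓ).image (theInter ℓ) := by rw [himg]; exact hpℓ
      obtain ⟨ℓ'', h'', hpeq⟩ := Finset.mem_image.mp hpim
      have h3 := Finset.mem_erase.mp h''
      have hp2 : p ∈ ℓ'' := hpeq ▸ theInter_mem_right (hint ℓ hℓL ℓ'' h3.2 (Ne.symm h3.1))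
      have h4 := ppDeg_ge_two hℓL h3.2 (Ne.symm h3.1) hpℓ hp2
      have h5 := hdeg2 p
      omega
    -- double counting
    have hsum : ∑ p : Fin (n^2+n+1), ppDeg L p = ∑ ℓ ∈ L, ℓ.card := by
      unfold ppDeg
      simp_rw [Finset.card_filter]
      rw [Finset.sum_comm]
      refine Finset.sum_congr rfl (fun ℓ hℓ => ?_)
      rw [← Finset.card_filter]
      congr 1
      ext p
      simp
    have h2C : 2 * C.card = (n+2) * (n+1) := by
      have hsplit : ∑ p ∈ U, ppDeg L p + ∑ p ∈ C, ppDeg L p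
          = ∑ p : Fin (n^2+n+1), ppDeg L p := by
        rw [hUdef, hCdef]
        exact Finset.sum_filter_add_sum_filter_not _ _ _
      have hU0 : ∑ p ∈ U, ppDeg L p = 0 := by
        apply Finset.sum_eq_zero
        intro p hp
        exact (Finset.mem_filter.mp hp).2
      have hC2 : ∑ p ∈ C, ppDeg L p = 2 * C.card := by
        rw [Finset.sum_congr rfl (fun p hp => hdegC p (Finset.mem_filter.mp hp).2),
          Finset.sum_const, smul_eq_mul, Nat.mul_comm]
      have hLsum : ∑ ℓ ∈ L, ℓ.card = (n+2) * (n+1) := by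
        rw [Finset.sum_congr rfl hcard, Finset.sum_const, smul_eq_mul, hm2]
      calc 2 * C.card = ∑ p ∈ C, ppDeg L p := hC2.symm
        _ = ∑ p : Fin (n^2+n+1), ppDeg L p := by rw [← hsplit, hU0, Nat.zero_add]
        _ = ∑ ℓ ∈ L, ℓ.card := hsum
        _ = (n+2)*(n+1) := hLsum
    -- enough uncovered points
    have hUk : k ≤ U.card := by
      have e1 : 2 * (U.card + C.card) = 2 * (n^2+n+1) := by rw [hUC]
      nlinarith [sq_nonneg n]
    obtain ⟨T, hTU, hTcard⟩ := Finset.exists_subset_card_eq hUk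
    -- enumerate the lines
    set ls := L.toList with hls
    have hlen : ls.length = n + 2 := by rw [hls, Finset.length_toList, hm2]
    have hmemls : ∀ j, j < n + 2 → ls.getD j ∅ ∈ L := by
      intro j hj
      rw [List.getD_eq_getElem ls ∅ (by omega)]
      exact Finset.mem_toList.mp (List.getElem_mem _)
    have hinjls : ∀ j1 j2, j1 < n+2 → j2 < n+2 → ls.getD j1 ∅ = ls.getD j2 ∅ → j1 = j2 := by
      intro j1 j2 h1 h2 heq
      rw [List.getD_eq_getElem ls ∅ (by omega), List.getD_eq_getElem ls ∅ (by omega)] at heq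
      exact (List.Nodup.getElem_inj_iff (Finset.nodup_toList L)).mp heq
    have hsurjls : ∀ ℓ ∈ L, ∃ j, j < n+2 ∧ ls.getD j ∅ = ℓ := by
      intro ℓ hℓ
      have hmem : ℓ ∈ ls := Finset.mem_toList.mpr hℓ
      obtain ⟨j, hj, hget⟩ := List.getElem_of_mem hmem
      exact ⟨j, by omega, by rw [List.getD_eq_getElem ls ∅ hj]; exact hget⟩
    set pt : ℕ → Fin (n^2+n+1) :=
      fun i => theInter (ls.getD (2*i) ∅) (ls.getD (2*i+1) ∅) with hpt
    -- basic facts about pt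
    have hptmem : ∀ i ≤ k, pt i ∈ ls.getD (2*i) ∅ ∧ pt i ∈ ls.getD (2*i+1) ∅ ∧
        ls.getD (2*i) ∅ ∈ L ∧ ls.getD (2*i+1) ∅ ∈ L ∧ ls.getD (2*i) ∅ ≠ ls.getD (2*i+1) ∅ := by
      intro i hi
      have h1 : 2*i < n + 2 := by omega
      have h2 : 2*i+1 < n + 2 := by omega
      have ha := hmemls _ h1
      have hb := hmemls _ h2
      have hne : ls.getD (2*i) ∅ ≠ ls.getD (2*i+1) ∅ := by
        intro h
        have := hinjls _ _ h1 h2 h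
        omega
      have hc := hint _ ha _ hb hne
      exact ⟨theInter_mem_left hc, theInter_mem_right hc, ha, hb, hne⟩
    -- pt is injective on range (k+1)
    have hptinj : Set.InjOn pt (Finset.range (k+1)) := by
      intro i hi j hj heq
      by_contra hne
      simp only [Finset.coe_range, Set.mem_Iio] at hi hj
      obtain ⟨ha1, ha2, haL, hbL, hab⟩ := hptmem i (by omega)
      obtain ⟨hc1, hc2, hcL, hdL, hcd⟩ := hptmem j (by omega)
      have hac : ls.getD (2*i) ∅ ≠ ls.getD (2*j) ∅ := by
        intro h
        have := hinjls _ _ (by omega) (by omega) h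
        omega
      have hbc : ls.getD (2*i+1) ∅ ≠ ls.getD (2*j) ∅ := by
        intro h
        have := hinjls _ _ (by omega) (by omega) h
        omega
      have hx : pt i ∈ ls.getD (2*j) ∅ := heq ▸ hc1
      have h3 := ppDeg_ge_three haL hbL hcL hab hac hbc ha1 ha2 hx
      have h4 := hcon (pt i)
      omega
    set core := (Finset.range (k+1)).image pt with hcore
    have hcorecard : core.card = k + 1 := by
      rw [hcore, Finset.card_image_of_injOn hptinj, Finset.card_range]
    have hdisj : Disjoint core T := by
      rw [Finset.disjoint_left]
      intro x hx hxT
      obtain ⟨i, hi, rfl⟩ := Finset.mem_image.mp hx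
      rw [Finset.mem_range] at hi
      obtain ⟨ha1, _, haL, _, _⟩ := hptmem i (by omega)
      have h1 := ppDeg_ge_one haL ha1
      have h0 := (Finset.mem_filter.mp (hTU hxT)).2
      omega
    set ℓ' := core ∪ T with hℓ'def
    have hcard' : ℓ'.card = n + 1 := by
      rw [hℓ'def, Finset.card_union_of_disjoint hdisj, hcorecard, hTcard]
      omega
    have hprop : ∀ ℓ ∈ L, (ℓ' ∩ ℓ).card = 1 := by
      intro ℓ hℓ
      obtain ⟨j, hj, hjeq⟩ := hsurjls ℓ hℓ
      set i := j / 2 with hi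
      have hik : i ≤ k := by omega
      have hj2 : j = 2*i ∨ j = 2*i+1 := by omega
      obtain ⟨ha1, ha2, haL, hbL, hab⟩ := hptmem i hik
      have hptℓ : pt i ∈ ℓ := by
        rcases hj2 with h | h <;> rw [← hjeq, h]
        · exact ha1
        · exact ha2
      have hmemf : pt i ∈ ℓ' ∩ ℓ := by
        refine Finset.mem_inter.mpr ⟨?_, hptℓ⟩
        exact Finset.mem_union_left _
          (Finset.mem_image_of_mem pt (Finset.mem_range.mpr (by omega)))
      have huniq : ∀ x ∈ ℓ' ∩ ℓ, x = pt i := by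
        intro x hx
        obtain ⟨hxℓ', hxℓ⟩ := Finset.mem_inter.mp hx
        rcases Finset.mem_union.mp hxℓ' with hxi | hxT
        · obtain ⟨i', hi', rfl⟩ := Finset.mem_image.mp hxi
          rw [Finset.mem_range] at hi'
          by_contra hne
          have hii : i' ≠ i := by
            intro h
            exact hne (by rw [h])
          obtain ⟨hc1, hc2, hcL, hdL, hcd⟩ := hptmem i' (by omega)
          have hcℓ : ls.getD (2*i') ∅ ≠ ℓ := by
            rw [← hjeq]
            intro h
            have := hinjls _ _ (by omega) (by omega) h
            omega
          have hdℓ : ls.getD (2*i'+1) ∅ ≠ ℓ := by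
            rw [← hjeq]
            intro h
            have := hinjls _ _ (by omega) (by omega) h
            omega
          have h3 := ppDeg_ge_three hcL hdL hℓ hcd hcℓ hdℓ hc1 hc2 hxℓ
          have h4 := hcon (pt i')
          omega
        · have h0 := (Finset.mem_filter.mp (hTU hxT)).2
          have h1 := ppDeg_ge_one hℓ hxℓ
          omega
      exact Finset.card_eq_one.mpr ⟨pt i, Finset.eq_singleton_iff_unique_mem.mpr ⟨hmemf, huniq⟩⟩
    exact hfinal ℓ' hcard' hprop
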